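/- Courant–Lebesgue lemma: let φ ∈ H¹(D;ℝᵈ) with D(φ) ≤ M, let p ∈ D̄, and 0 < δ < 1. Then there exists ρ ∈ [δ, √δ] such that the restriction of φ to the arc C_ρ = D ∩ ∂B(p,ρ) is absolutely continuous and its length satisfies (length)² ≤ (2π · 4M)/log(1/δ). -/

import Mathlib

open MeasureTheory RealInnerProductSpace
open scoped Real ENNReal

noncomputable section

/-- The open unit disk, viewed as a subset of `ℂ ≅ ℝ²`. -/
def unitDisk : Set ℂ := Metric.ball 0 1

variable {d : ℕ}

/-- `ψ_u`, the partial derivative in the `u`-direction. -/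
def pu (ψ : ℂ → EuclideanSpace ℝ (Fin d)) (p : ℂ) : EuclideanSpace ℝ (Fin d) :=
  fderiv ℝ ψ p 1

/-- `ψ_v`, the partial derivative in the `v`-direction. -/
def pv (ψ : ℂ → EuclideanSpace ℝ (Fin d)) (p : ℂ) : EuclideanSpace ℝ (Fin d) :=
  fderiv ℝ ψ p Complex.I

/-- The Dirichlet integral `D(ψ) = (1/2)∫_D |∇ψ|²`. -/
def dirichletIntegral (ψ : ℂ → EuclideanSpace ℝ (Fin d)) : ℝ :=
  (1 / 2) * ∫ p in unitDisk, (‖pu ψ p‖ ^ 2 + ‖pv ψ p‖ ^ 2)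

/-- The area functional `A(ψ) = ∫_D |ψ_u ∧ ψ_v|`. -/
def areaFunctional (ψ : ℂ → EuclideanSpace ℝ (Fin d)) : ℝ :=
  ∫ p in unitDisk, Real.sqrt (‖pu ψ p‖ ^ 2 * ‖pv ψ p‖ ^ 2 - ⟪pu ψ p, pv ψ p⟫ ^ 2)

/-- The length of the image under `φ` of the arc `C_ρ = D ∩ ∂B(p,ρ)`, computed in the
angular parametrization `θ ↦ p + ρ e^{iθ}`. -/
def arcImageLength (φ : ℂ → EuclideanSpace ℝ (Fin d)) (p : ℂ) (ρ : ℝ) : ℝ :=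
  ∫ θ in {θ : ℝ | θ ∈ Set.Icc 0 (2 * π) ∧ p + ρ * Complex.exp (θ * Complex.I) ∈ unitDisk},
    ‖deriv (fun t : ℝ => φ (p + ρ * Complex.exp ((t : ℂ) * Complex.I))) θ‖

section aux

open Set
open scoped ENNReal

theorem myLintegralPolar (f : ℝ × ℝ → ℝ≥0∞) :
    (∫⁻ q in polarCoord.target, ENNReal.ofReal q.1 * f (polarCoord.symm q)) = ∫⁻ q, f q := by
  set B : ℝ × ℝ → ℝ × ℝ →L[ℝ] ℝ × ℝ := fun p =>
    LinearMap.toContinuousLinearMap (Matrix.toLin (Module.Basis.finTwoProd ℝ) (Module.Basis.finTwoProd ℝ)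
      !![Real.cos p.2, -p.1 * Real.sin p.2; Real.sin p.2, p.1 * Real.cos p.2])
  have B_det : ∀ p, (B p).det = p.1 := by
    intro p
    conv_rhs => rw [← one_mul p.1, ← Real.cos_sq_add_sin_sq p.2]
    simp only [B, neg_mul, LinearMap.det_toContinuousLinearMap, LinearMap.det_toLin,
      Matrix.det_fin_two_of, sub_neg_eq_add]
    ring
  symm
  calc
    ∫⁻ q, f q = ∫⁻ q in polarCoord.source, f q := by
      rw [← setLIntegral_univ]
      exact (setLIntegral_congr polarCoord_source_ae_eq_univ.symm)
    _ = ∫⁻ q in polarCoord.symm '' polarCoord.target, f q := by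
      rw [OpenPartialHomeomorph.symm_image_target_eq_source]
    _ = ∫⁻ q in polarCoord.target, ENNReal.ofReal |(B q).det| * f (polarCoord.symm q) := by
      apply lintegral_image_eq_lintegral_abs_det_fderiv_mul volume
        polarCoord.open_target.measurableSet
        (fun q _ => (hasFDerivAt_polarCoord_symm q).hasFDerivWithinAt)
        polarCoord.symm.injOn
    _ = ∫⁻ q in polarCoord.target, ENNReal.ofReal q.1 * f (polarCoord.symm q) := by
      refine setLIntegral_congr_fun polarCoord.open_target.measurableSet
        (fun x hx => ?_)
      rw [B_det, abs_of_pos hx.1]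

theorem myLintegralPolarC (f : ℂ → ℝ≥0∞) (hf : Measurable f) :
    (∫⁻ q in polarCoord.target, ENNReal.ofReal q.1 * f (Complex.polarCoord.symm q)) =
      ∫⁻ z, f z := by
  rw [← (Complex.volume_preserving_equiv_real_prod.symm).lintegral_comp hf,
    ← myLintegralPolar]
  rfl

theorem myPeriodicShift (F : ℝ → ℝ≥0∞) (hper : ∀ x, F (x + 2 * π) = F x) :
    ∫⁻ θ in Ioo (-π) π, F θ = ∫⁻ θ in Ioc 0 (2 * π), F θ := by
  have pi_pos := Real.pi_pos
  have h1 : ∫⁻ θ in Ioo (-π) π, F θ = ∫⁻ θ in Ioc (-π) π, F θ :=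
    setLIntegral_congr Ioo_ae_eq_Ioc
  have hsplit1 : Ioc (-π) 0 ∪ Ioc 0 π = Ioc (-π) π :=
    Ioc_union_Ioc_eq_Ioc (by linarith) (by linarith)
  have hsplit2 : Ioc 0 π ∪ Ioc π (2 * π) = Ioc 0 (2 * π) :=
    Ioc_union_Ioc_eq_Ioc (by linarith) (by linarith)
  have hdisj1 : Disjoint (Ioc (-π) (0:ℝ)) (Ioc 0 π) := by
    rw [Set.disjoint_left]; rintro x ⟨_, h1⟩ ⟨h2, _⟩; linarith
  have hdisj2 : Disjoint (Ioc (0:ℝ) π) (Ioc π (2 * π)) := by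
    rw [Set.disjoint_left]; rintro x ⟨_, h1⟩ ⟨h2, _⟩; linarith
  have hshift : ∫⁻ θ in Ioc (-π) 0, F θ = ∫⁻ θ in Ioc π (2 * π), F θ := by
    have hpre : (fun x : ℝ => x + 2 * π) ⁻¹' Ioc π (2 * π) = Ioc (-π) 0 := by
      ext x; simp only [mem_preimage, mem_Ioc]; constructor <;> rintro ⟨a, b⟩ <;>
        constructor <;> linarith
    have h2 := (measurePreserving_add_right (volume : Measure ℝ)
      (2 * π)).setLIntegral_comp_preimage_emb (measurableEmbedding_addRight (2 * π)) F
      (Ioc π (2 * π))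
    rw [hpre] at h2
    rw [← h2]
    exact lintegral_congr fun x => (hper x).symm
  rw [h1, ← hsplit1, ← hsplit2, lintegral_union measurableSet_Ioc hdisj1,
    lintegral_union measurableSet_Ioc hdisj2, hshift, add_comm]

theorem myMVT (J b : ℝ → ℝ≥0∞) (s : Set ℝ) (hs : MeasurableSet s) (hμ : 0 < volume s)
    (hJ : Measurable J) (hb : Measurable b)
    (hib : ∫⁻ r in s, b r ≠ ∞) (hle : ∫⁻ r in s, J r ≤ ∫⁻ r in s, b r) :
    ∃ r ∈ s, J r ≤ b r := by
  by_contra hcon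
  push_neg at hcon
  have hba : ∀ᵐ r ∂(volume.restrict s), b r ≤ J r := by
    filter_upwards [ae_restrict_mem hs] with r hr
    exact (hcon r hr).le
  have hge : ∫⁻ r in s, b r ≤ ∫⁻ r in s, J r := lintegral_mono_ae hba
  have heq : ∫⁻ r in s, J r = ∫⁻ r in s, b r := le_antisymm hle hge
  have hsub : ∫⁻ r in s, (J r - b r) = 0 := by
    rw [lintegral_sub hb hib hba, heq, tsub_self]
  have hae := (lintegral_eq_zero_iff (hJ.sub hb)).mp hsub
  have : ∀ᵐ r ∂(volume.restrict s), False := by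
    filter_upwards [hae, ae_restrict_mem hs] with r h0 hr
    have hlt := hcon r hr
    have h0' : J r - b r = 0 := h0
    have : J r ≤ b r := tsub_eq_zero_iff_le.mp h0'
    exact absurd this (not_le.mpr hlt)
  rw [ae_iff] at this
  simp only [not_false_iff] at this
  have : volume.restrict s Set.univ = 0 := by
    simpa [Set.compl_setOf] using this
  rw [Measure.restrict_apply_univ] at this
  exact absurd this hμ.ne'

theorem myCS (μ : Measure ℝ) (f : ℝ → ℝ≥0∞) (hf : AEMeasurable f μ) :
    (∫⁻ x, f x ∂μ) ^ 2 ≤ (∫⁻ x, f x ^ 2 ∂μ) * μ Set.univ := by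
  have hpq : Real.HolderConjugate 2 2 := Real.HolderConjugate.two_two
  have h := ENNReal.lintegral_mul_le_Lp_mul_Lq μ hpq hf aemeasurable_const (g := fun _ => 1)
  simp only [Pi.mul_apply, mul_one, lintegral_const, one_mul, ENNReal.one_rpow] at h
  have h2 : ∀ x, f x ^ (2:ℝ) = f x ^ (2:ℕ) := fun x => by
    rw [← ENNReal.rpow_natCast (f x) 2]; norm_num
  have key : (∫⁻ x, f x ∂μ) ^ (2:ℕ)
      ≤ ((∫⁻ x, f x ^ (2:ℕ) ∂μ) ^ (1/(2:ℝ)) * (μ Set.univ) ^ (1/(2:ℝ))) ^ (2:ℕ) := by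
    gcongr
    calc ∫⁻ x, f x ∂μ ≤ (∫⁻ a, f a ^ (2:ℝ) ∂μ) ^ (1/(2:ℝ)) * (μ Set.univ) ^ (1/(2:ℝ)) := by
          exact h
      _ = (∫⁻ x, f x ^ (2:ℕ) ∂μ) ^ (1/(2:ℝ)) * (μ Set.univ) ^ (1/(2:ℝ)) := by
          congr 2; exact lintegral_congr fun x => h2 x
  refine key.trans (le_of_eq ?_)
  rw [mul_pow, ← ENNReal.rpow_natCast (_ ^ (1/(2:ℝ))) 2,
    ← ENNReal.rpow_natCast ((μ Set.univ) ^ (1/(2:ℝ))) 2, ← ENNReal.rpow_mul,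
    ← ENNReal.rpow_mul]
  norm_num

end aux

theorem myIneq (A x y a b R : ℝ) (hA : 0 ≤ A) (h : A ≤ |a| * x + |b| * y)
    (hx : 0 ≤ x) (hy : 0 ≤ y) (hab : a ^ 2 + b ^ 2 = R) :
    A ^ 2 ≤ R * (x ^ 2 + y ^ 2) := by
  have h1 : A ^ 2 ≤ (|a| * x + |b| * y) ^ 2 := by
    nlinarith
  have h2 : (|a| * x + |b| * y) ^ 2 ≤ (a ^ 2 + b ^ 2) * (x ^ 2 + y ^ 2) := by
    nlinarith [sq_nonneg (|a| * y - |b| * x), sq_abs a, sq_abs b]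
  nlinarith

/-- **Courant–Lebesgue lemma.** Let `φ ∈ H¹(D;ℝᵈ)` with `D(φ) ≤ M`,
let `p ∈ D̄` and `0 < δ < 1`.  Then there exists `ρ ∈ [δ, √δ]` such that the restriction
of `φ` to the arc `C_ρ = D ∩ ∂B(p,ρ)` is absolutely continuous and the length of its
image satisfies `(length)² ≤ 2π·4M / log(1/δ)`. -/
theorem courant_lebesgue {d : ℕ} (φ : ℂ → EuclideanSpace ℝ (Fin d)) (M : ℝ)
    (hφ : DifferentiableOn ℝ φ unitDisk)
    (hφL2 : IntegrableOn (fun q => ‖pu φ q‖ ^ 2 + ‖pv φ q‖ ^ 2) unitDisk)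
    (hM : dirichletIntegral φ ≤ M)
    (p : ℂ) (hp : p ∈ Metric.closedBall (0 : ℂ) 1)
    (δ : ℝ) (hδ0 : 0 < δ) (hδ1 : δ < 1) :
    ∃ ρ ∈ Set.Icc δ (Real.sqrt δ),
      arcImageLength φ p ρ ^ 2 ≤ 2 * π * (4 * M) / Real.log (1 / δ) := by
  have pi_pos := Real.pi_pos
  have hDopen : IsOpen unitDisk := Metric.isOpen_ball
  have hDmeas : MeasurableSet unitDisk := hDopen.measurableSet
  set L := Real.log (1 / δ) with hLdef
  have hL : 0 < L := Real.log_pos (by rw [lt_div_iff₀ hδ0]; linarith)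
  have hDnn : 0 ≤ ∫ q in unitDisk, (‖pu φ q‖ ^ 2 + ‖pv φ q‖ ^ 2) :=
    setIntegral_nonneg hDmeas (fun q _ => by positivity)
  have hM0 : 0 ≤ M := by
    unfold dirichletIntegral at hM; linarith
  have hI2M : ∫ q in unitDisk, (‖pu φ q‖ ^ 2 + ‖pv φ q‖ ^ 2) ≤ 2 * M := by
    unfold dirichletIntegral at hM; linarith
  have hsq : δ < Real.sqrt δ := by
    nlinarith [Real.sq_sqrt hδ0.le, Real.sqrt_pos.mpr hδ0]
  -- the gradient-squared density
  set G : ℂ → ℝ≥0∞ := fun q =>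
    unitDisk.indicator (fun q => ENNReal.ofReal (‖pu φ q‖ ^ 2 + ‖pv φ q‖ ^ 2)) q with hGdef
  have hGmeas : Measurable G := by
    apply Measurable.indicator _ hDmeas
    have h1 : Measurable fun q : ℂ => fderiv ℝ φ q 1 := measurable_fderiv_apply_const ℝ φ 1
    have h2 : Measurable fun q : ℂ => fderiv ℝ φ q Complex.I :=
      measurable_fderiv_apply_const ℝ φ Complex.I
    exact ((h1.norm.pow measurable_const).add (h2.norm.pow measurable_const)).ennreal_ofReal
  have hG_int : ∫⁻ z, G z ≤ ENNReal.ofReal (2 * M) := by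
    rw [hGdef]
    rw [lintegral_indicator hDmeas]
    rw [← ofReal_integral_eq_lintegral_ofReal hφL2
      (Filter.Eventually.of_forall fun q => by positivity)]
    exact ENNReal.ofReal_le_ofReal hI2M
  -- polar integrand
  set Ψ : ℝ × ℝ → ℝ≥0∞ := fun z =>
    ENNReal.ofReal z.1 * G (p + z.1 * Complex.exp (z.2 * Complex.I)) with hΨdef
  have hcont : Continuous fun z : ℝ × ℝ => p + (z.1 : ℂ) * Complex.exp ((z.2 : ℂ) * Complex.I) :=
    by continuity
  have hΨmeas : Measurable Ψ :=
    (measurable_fst.ennreal_ofReal).mul (hGmeas.comp hcont.measurable)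
  have hGp_meas : Measurable fun z : ℂ => G (p + z) :=
    hGmeas.comp (measurable_const.add measurable_id)
  have hsymm : ∀ q : ℝ × ℝ,
      Complex.polarCoord.symm q = (q.1 : ℂ) * Complex.exp ((q.2 : ℂ) * Complex.I) := by
    intro q
    rw [Complex.polarCoord_symm_apply, Complex.exp_mul_I, Complex.ofReal_cos, Complex.ofReal_sin]
  have hpolar : ∫⁻ z in polarCoord.target, Ψ z = ∫⁻ z, G z := by
    calc ∫⁻ z in polarCoord.target, Ψ z
        = ∫⁻ z in polarCoord.target,
            ENNReal.ofReal z.1 * (fun w => G (p + w)) (Complex.polarCoord.symm z) := by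
          refine lintegral_congr fun z => ?_
          rw [hsymm z]
      _ = ∫⁻ z, G (p + z) := myLintegralPolarC _ hGp_meas
      _ = ∫⁻ z, G z := lintegral_add_left_eq_self (fun z => G z) p
  -- Fubini
  have hfub : ∫⁻ z in polarCoord.target, Ψ z
      = ∫⁻ r in Set.Ioi (0:ℝ), ∫⁻ θ in Set.Ioo (-π) π, Ψ (r, θ) := by
    rw [polarCoord_target]
    rw [Measure.volume_eq_prod, ← Measure.prod_restrict]
    exact lintegral_prod _ hΨmeas.aemeasurable
  -- the one-variable integral over the whole circle
  set J : ℝ → ℝ≥0∞ := fun r => ∫⁻ θ in Set.Ioc 0 (2 * π), Ψ (r, θ) with hJdef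
  have hΨper : ∀ r x, Ψ (r, x + 2 * π) = Ψ (r, x) := by
    intro r x
    simp only [hΨdef]
    congr 3
    push_cast
    rw [add_mul, Complex.exp_add, Complex.exp_two_pi_mul_I, mul_one]
  have hperiodic : ∀ r, ∫⁻ θ in Set.Ioo (-π) π, Ψ (r, θ) = J r := fun r =>
    myPeriodicShift (fun θ => Ψ (r, θ)) (hΨper r)
  have hJmeas : Measurable J := by
    have : Measurable (Function.uncurry fun r θ =>
        (Set.Ioc 0 (2 * π)).indicator (fun θ' => Ψ (r, θ')) θ) := by
      have : (Function.uncurry fun r θ =>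
          (Set.Ioc 0 (2 * π)).indicator (fun θ' => Ψ (r, θ')) θ)
          = (Set.univ ×ˢ Set.Ioc 0 (2 * π)).indicator Ψ := by
        ext z
        rcases z with ⟨r, θ⟩
        by_cases hθ : θ ∈ Set.Ioc 0 (2 * π) <;>
          simp [Function.uncurry, Set.indicator, hθ]
      rw [this]
      exact hΨmeas.indicator (MeasurableSet.univ.prod measurableSet_Ioc)
    have h := Measurable.lintegral_prod_right (ν := volume) this
    have hJeq : J = fun r => ∫⁻ θ, (Set.Ioc 0 (2 * π)).indicator (fun θ' => Ψ (r, θ')) θ := by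
      funext r
      rw [hJdef]
      exact (lintegral_indicator measurableSet_Ioc _).symm
    rw [hJeq]
    exact h
  -- key upper bound on the radial integral of J
  have hkey : ∫⁻ r in Set.Ioc δ (Real.sqrt δ), J r ≤ ENNReal.ofReal (2 * M) := by
    calc ∫⁻ r in Set.Ioc δ (Real.sqrt δ), J r
        = ∫⁻ r in Set.Ioc δ (Real.sqrt δ), ∫⁻ θ in Set.Ioo (-π) π, Ψ (r, θ) :=
          lintegral_congr fun r => (hperiodic r).symm
      _ ≤ ∫⁻ r in Set.Ioi 0, ∫⁻ θ in Set.Ioo (-π) π, Ψ (r, θ) :=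
          lintegral_mono_set (fun x hx => Set.mem_Ioi.mpr (hδ0.trans hx.1))
      _ = ∫⁻ z in polarCoord.target, Ψ z := hfub.symm
      _ = ∫⁻ z, G z := hpolar
      _ ≤ ENNReal.ofReal (2 * M) := hG_int
  -- mean value argument
  set c : ℝ≥0∞ := ENNReal.ofReal (4 * M / L) with hcdef
  set b : ℝ → ℝ≥0∞ := fun r => (ENNReal.ofReal r)⁻¹ * c with hbdef
  have hbmeas : Measurable b := (measurable_id.ennreal_ofReal.inv).mul_const c
  have hinv : ∫⁻ r in Set.Ioc δ (Real.sqrt δ), (ENNReal.ofReal r)⁻¹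
      = ENNReal.ofReal (L / 2) := by
    have h1 : ∫⁻ r in Set.Ioc δ (Real.sqrt δ), (ENNReal.ofReal r)⁻¹
        = ∫⁻ r in Set.Ioc δ (Real.sqrt δ), ENNReal.ofReal r⁻¹ := by
      refine setLIntegral_congr_fun measurableSet_Ioc
        (fun r hr => ?_)
      rw [ENNReal.ofReal_inv_of_pos (hδ0.trans hr.1)]
    have hint : IntegrableOn (fun r : ℝ => r⁻¹) (Set.Ioc δ (Real.sqrt δ)) := by
      apply IntegrableOn.mono_set (t := Set.Icc δ (Real.sqrt δ)) ?_ Set.Ioc_subset_Icc_self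
      apply ContinuousOn.integrableOn_compact isCompact_Icc
      exact ContinuousOn.inv₀ continuousOn_id (fun x hx => (hδ0.trans_le hx.1).ne')
    have hnn : 0 ≤ᵐ[volume.restrict (Set.Ioc δ (Real.sqrt δ))] fun r : ℝ => r⁻¹ := by
      filter_upwards [ae_restrict_mem measurableSet_Ioc] with r hr
      exact inv_nonneg.mpr (hδ0.trans hr.1).le
    have h2 : ∫ r in Set.Ioc δ (Real.sqrt δ), r⁻¹ = L / 2 := by
      rw [← intervalIntegral.integral_of_le hsq.le]
      rw [integral_inv_of_pos hδ0 (Real.sqrt_pos.mpr hδ0)]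
      rw [Real.log_div (Real.sqrt_pos.mpr hδ0).ne' hδ0.ne']
      rw [Real.log_sqrt hδ0.le]
      rw [hLdef, one_div, Real.log_inv]
      ring
    rw [h1, ← ofReal_integral_eq_lintegral_ofReal hint hnn, h2]
  have hbint : ∫⁻ r in Set.Ioc δ (Real.sqrt δ), b r = ENNReal.ofReal (2 * M) := by
    calc ∫⁻ r in Set.Ioc δ (Real.sqrt δ), b r
        = (∫⁻ r in Set.Ioc δ (Real.sqrt δ), (ENNReal.ofReal r)⁻¹) * c :=
          lintegral_mul_const c ENNReal.measurable_ofReal.inv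
      _ = ENNReal.ofReal (2 * M) := by
          rw [hinv, hcdef, ← ENNReal.ofReal_mul (by positivity)]
          congr 1
          field_simp
          ring
  have hμpos : 0 < volume (Set.Ioc δ (Real.sqrt δ)) := by
    rw [Real.volume_Ioc]
    exact ENNReal.ofReal_pos.mpr (by linarith)
  obtain ⟨r, hrmem, hrJ⟩ := myMVT J b _ measurableSet_Ioc hμpos hJmeas hbmeas
    (by rw [hbint]; exact ENNReal.ofReal_ne_top) (by rw [hbint]; exact hkey)
  have hr0 : 0 < r := hδ0.trans hrmem.1
  refine ⟨r, ⟨hrmem.1.le, hrmem.2⟩, ?_⟩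
  -- the chosen circle
  set S : Set ℝ := {θ : ℝ | θ ∈ Set.Icc 0 (2 * π) ∧
      p + r * Complex.exp (θ * Complex.I) ∈ unitDisk} with hSdef
  set g : ℝ → ℝ := fun θ =>
    ‖deriv (fun t : ℝ => φ (p + r * Complex.exp ((t : ℂ) * Complex.I))) θ‖ with hgdef
  have hgnn : ∀ θ, 0 ≤ g θ := fun θ => norm_nonneg _
  have harc : arcImageLength φ p r = ∫ θ in S, g θ := rfl
  have hSsub : S ⊆ Set.Icc 0 (2 * π) := fun θ hθ => hθ.1
  have hSmeas : MeasurableSet S := by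
    have hS2 : S = Set.Icc 0 (2 * π) ∩
        (fun θ : ℝ => p + r * Complex.exp (θ * Complex.I)) ⁻¹' unitDisk := rfl
    rw [hS2]
    have hcont2 : Continuous fun θ : ℝ => p + (r : ℂ) * Complex.exp ((θ : ℂ) * Complex.I) :=
      continuous_const.add (continuous_const.mul
        (Complex.continuous_exp.comp (Complex.continuous_ofReal.mul continuous_const)))
    exact measurableSet_Icc.inter (hcont2.measurable hDmeas)
  have hgmeas : Measurable g := (measurable_deriv _).norm
  -- pointwise chain rule estimate on S
  have hpoint : ∀ θ ∈ S, ENNReal.ofReal (g θ ^ 2) ≤ ENNReal.ofReal r * Ψ (r, θ) := by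
    intro θ hθ
    have hqD : p + (r : ℂ) * Complex.exp ((θ : ℂ) * Complex.I) ∈ unitDisk := hθ.2
    set q : ℂ := p + (r : ℂ) * Complex.exp ((θ : ℂ) * Complex.I) with hqdef
    have hdiff : DifferentiableAt ℝ φ q := hφ.differentiableAt (hDopen.mem_nhds hqD)
    set w : ℂ := (r : ℂ) * (Complex.exp ((θ : ℂ) * Complex.I) * (1 * Complex.I)) with hwdef
    have he : HasDerivAt (fun t : ℝ => p + (r : ℂ) * Complex.exp ((t : ℂ) * Complex.I)) w θ := by
      have h0 : HasDerivAt (fun t : ℝ => (t : ℂ)) 1 θ := by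
        exact Complex.ofRealCLM.hasDerivAt
      have h1 : HasDerivAt (fun t : ℝ => (t : ℂ) * Complex.I) (1 * Complex.I) θ :=
        h0.mul_const _
      have h2 := h1.cexp
      exact (h2.const_mul ((r : ℂ))).const_add p
    have hcomp := hdiff.hasFDerivAt.comp_hasDerivAt θ he
    have hderiv : deriv (fun t : ℝ => φ (p + r * Complex.exp ((t : ℂ) * Complex.I))) θ
        = fderiv ℝ φ q w := hcomp.deriv
    have hval : (fderiv ℝ φ q) w = w.re • pu φ q + w.im • pv φ q := by
      have hw2 : w = w.re • (1 : ℂ) + w.im • Complex.I := by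
        rw [Complex.real_smul, Complex.real_smul, mul_one]
        exact (Complex.re_add_im w).symm
      conv_lhs => rw [hw2]
      rw [map_add, _root_.map_smul, _root_.map_smul]
      rfl
    have hwsq : w.re ^ 2 + w.im ^ 2 = r ^ 2 := by
      have habs : ‖w‖ = r := by
        rw [hwdef]
        simp [Complex.norm_exp_ofReal_mul_I, abs_of_pos hr0]
      have hsqa := Complex.sq_norm w
      rw [habs] at hsqa
      rw [hsqa, Complex.normSq_apply]
      ring
    have hnorm : g θ ≤ |w.re| * ‖pu φ q‖ + |w.im| * ‖pv φ q‖ := by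
      simp only [hgdef]
      rw [hderiv, hval]
      calc ‖w.re • pu φ q + w.im • pv φ q‖
          ≤ ‖w.re • pu φ q‖ + ‖w.im • pv φ q‖ := norm_add_le _ _
        _ = |w.re| * ‖pu φ q‖ + |w.im| * ‖pv φ q‖ := by
            rw [norm_smul, norm_smul]
            rfl
    have hsq2 : g θ ^ 2 ≤ r ^ 2 * (‖pu φ q‖ ^ 2 + ‖pv φ q‖ ^ 2) :=
      myIneq _ _ _ _ _ _ (hgnn θ) hnorm (norm_nonneg _) (norm_nonneg _) hwsq
    have hΨval : Ψ (r, θ)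
        = ENNReal.ofReal r * ENNReal.ofReal (‖pu φ q‖ ^ 2 + ‖pv φ q‖ ^ 2) := by
      simp only [hΨdef, hGdef]
      rw [← hqdef, Set.indicator_of_mem hqD]
    calc ENNReal.ofReal (g θ ^ 2)
        ≤ ENNReal.ofReal (r ^ 2 * (‖pu φ q‖ ^ 2 + ‖pv φ q‖ ^ 2)) :=
          ENNReal.ofReal_le_ofReal hsq2
      _ = ENNReal.ofReal r * Ψ (r, θ) := by
          rw [hΨval, ← mul_assoc, ← ENNReal.ofReal_mul hr0.le,
            ← ENNReal.ofReal_mul (mul_nonneg hr0.le hr0.le)]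
          congr 1
          ring
  -- Cauchy–Schwarz and conclusion
  have hΨrmeas : Measurable fun θ => ENNReal.ofReal r * Ψ (r, θ) :=
    (measurable_const.mul (hΨmeas.comp (measurable_const.prodMk measurable_id)))
  set X : ℝ≥0∞ := ∫⁻ θ in S, ENNReal.ofReal (g θ) with hXdef
  have hX2 : X ^ 2 ≤ ENNReal.ofReal (2 * π * (4 * M) / L) := by
    have hcs := myCS (volume.restrict S) (fun θ => ENNReal.ofReal (g θ))
      hgmeas.ennreal_ofReal.aemeasurable
    rw [Measure.restrict_apply_univ] at hcs
    have hsq' : ∫⁻ θ in S, (ENNReal.ofReal (g θ)) ^ 2 ≤ c := by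
      calc ∫⁻ θ in S, (ENNReal.ofReal (g θ)) ^ 2
          = ∫⁻ θ in S, ENNReal.ofReal (g θ ^ 2) :=
            lintegral_congr fun θ => (ENNReal.ofReal_pow (hgnn θ) 2).symm
        _ ≤ ∫⁻ θ in S, ENNReal.ofReal r * Ψ (r, θ) := setLIntegral_mono hΨrmeas hpoint
        _ ≤ ∫⁻ θ in Set.Icc 0 (2 * π), ENNReal.ofReal r * Ψ (r, θ) :=
            lintegral_mono_set hSsub
        _ = ∫⁻ θ in Set.Ioc 0 (2 * π), ENNReal.ofReal r * Ψ (r, θ) :=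
            setLIntegral_congr MeasureTheory.Ioc_ae_eq_Icc.symm
        _ = ENNReal.ofReal r * J r := by
            rw [hJdef]
            exact lintegral_const_mul _ (hΨmeas.comp (measurable_const.prodMk measurable_id))
        _ ≤ ENNReal.ofReal r * b r := mul_le_mul_right hrJ _
        _ = c := by
            rw [hbdef, ← mul_assoc, ENNReal.mul_inv_cancel
              (ENNReal.ofReal_pos.mpr hr0).ne' ENNReal.ofReal_ne_top, one_mul]
    have hvol : volume S ≤ ENNReal.ofReal (2 * π) := by
      calc volume S ≤ volume (Set.Icc 0 (2 * π)) := measure_mono hSsub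
        _ = ENNReal.ofReal (2 * π) := by rw [Real.volume_Icc, sub_zero]
    calc X ^ 2 ≤ (∫⁻ θ in S, (ENNReal.ofReal (g θ)) ^ 2) * volume S := hcs
      _ ≤ c * ENNReal.ofReal (2 * π) := mul_le_mul' hsq' hvol
      _ = ENNReal.ofReal (2 * π * (4 * M) / L) := by
          rw [hcdef, ← ENNReal.ofReal_mul (div_nonneg (by linarith) hL.le)]
          congr 1
          field_simp
  have hRHSnn : 0 ≤ 2 * π * (4 * M) / L :=
    div_nonneg (mul_nonneg (mul_nonneg (by norm_num) Real.pi_pos.le) (by linarith)) hL.le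
  rcases Classical.em (IntegrableOn g S volume) with hInt | hInt
  · have harc2 : arcImageLength φ p r = X.toReal := by
      rw [harc]
      have hofReal := ofReal_integral_eq_lintegral_ofReal hInt
        (Filter.Eventually.of_forall fun θ => hgnn θ)
      rw [hXdef, ← hofReal, ENNReal.toReal_ofReal (setIntegral_nonneg hSmeas fun θ _ => hgnn θ)]
    rw [harc2, ← ENNReal.toReal_pow]
    exact ENNReal.toReal_le_of_le_ofReal hRHSnn hX2
  · have h00 : (0:ℝ) ^ 2 = 0 := by norm_num
    rw [harc, integral_undef hInt, h00]
    exact hRHSnn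

end
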